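/- Fix d ≥ 1 and a nonempty action set A. On ℝ^d = EuclideanSpace ℝ (Fin d), let b : ℝ^d × A → ℝ^d and Q : ℝ^d × A → Matrix (Fin d) (Fin d) ℝ, and for twice continuously differentiable f define (L^a f)(s) = ⟪b(s,a), ∇f(s)⟫ + (1/2)·trace(Q(s,a) · Hess f(s)). Let g : ℝ^d → ℝ^d be twice continuously differentiable, fix s ∈ ℝ^d and a, ã ∈ A, and assume Q(s,a) and Q(g(s), ã) are symmetric. Suppose for every twice continuously differentiable f : ℝ^d → ℝ: (L^a (f ∘ g))(s) = (L^{ã} f)(g(s)). Then, writing J for the Jacobian matrix of g at s and g_k for the k-th component of g: Q(g(s), ã) = J · Q(s,a) · Jᵀ, and b(g(s), ã) = J · b(s,a) + (1/2) c, where c ∈ ℝ^d has components c_k = trace( Q(s,a) · Hess g_k(s) ). -/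

import Mathlib

open RealInnerProductSpace

/-- The Hessian matrix of second partial derivatives of `f` at `s`. -/
noncomputable def hessMat {d : ℕ} (f : EuclideanSpace ℝ (Fin d) → ℝ)
    (s : EuclideanSpace ℝ (Fin d)) : Matrix (Fin d) (Fin d) ℝ :=
  fun i j =>
    iteratedFDeriv ℝ 2 f s ![EuclideanSpace.single i 1, EuclideanSpace.single j 1]

/-- The controlled second-order generator
`(L^a f)(s) = ⟪b(s,a), ∇f(s)⟫ + (1/2)·trace(Q(s,a)·Hess f(s))`. -/
noncomputable def gen {d : ℕ} {A : Type*}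
    (b : EuclideanSpace ℝ (Fin d) × A → EuclideanSpace ℝ (Fin d))
    (Q : EuclideanSpace ℝ (Fin d) × A → Matrix (Fin d) (Fin d) ℝ)
    (a : A) (f : EuclideanSpace ℝ (Fin d) → ℝ) (s : EuclideanSpace ℝ (Fin d)) : ℝ :=
  ⟪b (s, a), gradient f s⟫ + (1 / 2) * (Q (s, a) * hessMat f s).trace

/-- The Hamiltonian `H[f](s) = ⨆_a ( r(s,a) + (L^a f)(s) )`. -/
noncomputable def ham {d : ℕ} {A : Type*}
    (b : EuclideanSpace ℝ (Fin d) × A → EuclideanSpace ℝ (Fin d))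
    (Q : EuclideanSpace ℝ (Fin d) × A → Matrix (Fin d) (Fin d) ℝ)
    (r : EuclideanSpace ℝ (Fin d) × A → ℝ)
    (f : EuclideanSpace ℝ (Fin d) → ℝ) (s : EuclideanSpace ℝ (Fin d)) : ℝ :=
  ⨆ a : A, (r (s, a) + gen b Q a f s)

open Matrix

/-- The Jacobian matrix of a map `g : ℝ^d → ℝ^d` at `s`. -/
noncomputable def jacMat {d : ℕ} (g : EuclideanSpace ℝ (Fin d) → EuclideanSpace ℝ (Fin d))
    (s : EuclideanSpace ℝ (Fin d)) : Matrix (Fin d) (Fin d) ℝ :=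
  fun i j => fderiv ℝ g s (EuclideanSpace.single j 1) i

section Aux

variable {d : ℕ}

private lemma inner_gradient' (f : EuclideanSpace ℝ (Fin d) → ℝ) (s v : EuclideanSpace ℝ (Fin d)) :
    ⟪v, gradient f s⟫ = fderiv ℝ f s v := by
  rw [real_inner_comm, gradient]
  exact InnerProductSpace.toDual_symm_apply

private lemma hessMat_eq' (f : EuclideanSpace ℝ (Fin d) → ℝ) (s : EuclideanSpace ℝ (Fin d))
    (i j : Fin d) :
    hessMat f s i j
      = fderiv ℝ (fderiv ℝ f) s (EuclideanSpace.single i 1) (EuclideanSpace.single j 1) := by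
  rw [hessMat, iteratedFDeriv_two_apply]
  simp

private lemma euclid_decomp' (v : EuclideanSpace ℝ (Fin d)) :
    v = ∑ i, v i • EuclideanSpace.single i (1:ℝ) := by
  ext j
  rw [WithLp.ofLp_sum, Finset.sum_apply]
  simp [EuclideanSpace.single_apply]

private lemma clm_apply_sum' {F : Type*} [NormedAddCommGroup F] [NormedSpace ℝ F]
    (T : EuclideanSpace ℝ (Fin d) →L[ℝ] F) (v : EuclideanSpace ℝ (Fin d)) :
    T v = ∑ i, v i • T (EuclideanSpace.single i 1) := by
  conv_lhs => rw [euclid_decomp' v]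
  rw [map_sum]
  simp

private lemma trace_mul_formula (M N : Matrix (Fin d) (Fin d) ℝ) :
    (M * N).trace = ∑ p, ∑ q, M p q * N q p := by
  simp [Matrix.trace, Matrix.diag, Matrix.mul_apply]

end Aux

theorem stmt_14 {d : ℕ} (hd : 1 ≤ d) {A : Type*} [Nonempty A]
    (b : EuclideanSpace ℝ (Fin d) × A → EuclideanSpace ℝ (Fin d))
    (Q : EuclideanSpace ℝ (Fin d) × A → Matrix (Fin d) (Fin d) ℝ)
    (g : EuclideanSpace ℝ (Fin d) → EuclideanSpace ℝ (Fin d))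
    (hg : ContDiff ℝ 2 g)
    (s : EuclideanSpace ℝ (Fin d)) (a a' : A)
    (hQsym₁ : (Q (s, a)).IsSymm) (hQsym₂ : (Q (g s, a')).IsSymm)
    (hequi : ∀ f : EuclideanSpace ℝ (Fin d) → ℝ, ContDiff ℝ 2 f →
      gen b Q a (f ∘ g) s = gen b Q a' f (g s)) :
    Q (g s, a') = jacMat g s * Q (s, a) * (jacMat g s)ᵀ
    ∧ ∀ k, b (g s, a') k
        = (jacMat g s).mulVec (fun i => b (s, a) i) k
          + (1 / 2) * (Q (s, a) * hessMat (fun x => g x k) s).trace := by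
  have hgd : Differentiable ℝ g := hg.differentiable two_ne_zero
  have hgk : ∀ k, ContDiff ℝ 2 (fun x => g x k) :=
    fun k => (EuclideanSpace.proj (𝕜 := ℝ) k).contDiff.comp hg
  have hgkd : ∀ k, Differentiable ℝ (fun x => g x k) :=
    fun k => (hgk k).differentiable two_ne_zero
  have hDgk : ∀ (k : Fin d) (x : EuclideanSpace ℝ (Fin d)),
      fderiv ℝ (fun y => g y k) x = (EuclideanSpace.proj k).comp (fderiv ℝ g x) :=
    fun k x => ((EuclideanSpace.proj (𝕜 := ℝ) k).hasFDerivAt.comp x (hgd x).hasFDerivAt).fderiv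
  have hD2gk : ∀ k : Fin d, Differentiable ℝ (fun x => fderiv ℝ (fun y => g y k) x) :=
    fun k => ((hgk k).fderiv_right (m := 1) le_rfl).differentiable one_ne_zero
  -- value of fderiv of k-th component on basis vectors
  have hJ : ∀ k q : Fin d,
      fderiv ℝ (fun y => g y k) s (EuclideanSpace.single q 1) = jacMat g s k q := by
    intro k q
    rw [hDgk k s]
    simp [jacMat]
  -- value of fderiv of k-th component on a general vector
  have hlin : ∀ k : Fin d, fderiv ℝ (fun y => g y k) s (b (s, a))
      = (jacMat g s).mulVec (fun i => b (s, a) i) k := by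
    intro k
    rw [clm_apply_sum', Matrix.mulVec]
    simp only [dotProduct]
    refine Finset.sum_congr rfl fun q _ => ?_
    rw [hJ k q, smul_eq_mul, mul_comm]
  -- hessian of coordinate functions vanishes
  have hcoordhess : ∀ (k : Fin d) (x : EuclideanSpace ℝ (Fin d)),
      hessMat (fun y => y k) x = 0 := by
    intro k x
    have h1 : (fderiv ℝ (fun y : EuclideanSpace ℝ (Fin d) => y k))
        = fun _ => (EuclideanSpace.proj (𝕜 := ℝ) k
            : EuclideanSpace ℝ (Fin d) →L[ℝ] ℝ) :=
      funext fun y => (EuclideanSpace.proj (𝕜 := ℝ) k).fderiv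
    ext p q
    rw [hessMat_eq', h1, fderiv_fun_const]
    simp
  -- DRIFT identity
  have hdrift : ∀ k, b (g s, a') k
      = (jacMat g s).mulVec (fun i => b (s, a) i) k
        + (1 / 2) * (Q (s, a) * hessMat (fun x => g x k) s).trace := by
    intro k
    have h := hequi (fun y => y k) (EuclideanSpace.proj (𝕜 := ℝ) k).contDiff
    simp only [gen, Function.comp_def] at h
    rw [inner_gradient', inner_gradient'] at h
    rw [hcoordhess k (g s)] at h
    have hc : fderiv ℝ (fun y : EuclideanSpace ℝ (Fin d) => y k) (g s)
        = EuclideanSpace.proj (𝕜 := ℝ) k := (EuclideanSpace.proj (𝕜 := ℝ) k).fderiv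
    rw [hc] at h
    have hpr : (EuclideanSpace.proj (𝕜 := ℝ) k) (b (g s, a')) = b (g s, a') k := rfl
    rw [hpr] at h
    simp only [Matrix.mul_zero, Matrix.trace_zero, mul_zero, add_zero] at h
    rw [hlin k] at h
    linarith
  refine ⟨?_, hdrift⟩
  -- DIFFUSION identity
  ext i j
  -- quadratic test function
  have hfd : ContDiff ℝ 2 (fun y : EuclideanSpace ℝ (Fin d) => y i * y j) :=
    (EuclideanSpace.proj (𝕜 := ℝ) i).contDiff.mul (EuclideanSpace.proj (𝕜 := ℝ) j).contDiff
  have h := hequi (fun y => y i * y j) hfd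
  simp only [gen, Function.comp_def] at h
  rw [inner_gradient', inner_gradient'] at h
  -- first derivative of the quadratic test function
  have hDf : ∀ x : EuclideanSpace ℝ (Fin d),
      fderiv ℝ (fun y : EuclideanSpace ℝ (Fin d) => y i * y j) x
        = x i • (EuclideanSpace.proj (𝕜 := ℝ) j) + x j • (EuclideanSpace.proj (𝕜 := ℝ) i) :=
    fun x => (((EuclideanSpace.proj (𝕜 := ℝ) i).hasFDerivAt (x := x)).mul
      ((EuclideanSpace.proj (𝕜 := ℝ) j).hasFDerivAt (x := x))).fderiv
  -- second derivative of the quadratic test function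
  have hHf : ∀ p q : Fin d,
      hessMat (fun y : EuclideanSpace ℝ (Fin d) => y i * y j) (g s) p q
        = (if i = p then (1:ℝ) else 0) * (if j = q then 1 else 0)
          + (if j = p then (1:ℝ) else 0) * (if i = q then 1 else 0) := by
    intro p q
    have hT : (fderiv ℝ (fun y : EuclideanSpace ℝ (Fin d) => y i * y j))
        = ⇑(((EuclideanSpace.proj (𝕜 := ℝ) i).smulRight (EuclideanSpace.proj (𝕜 := ℝ) j))
            + ((EuclideanSpace.proj (𝕜 := ℝ) j).smulRight (EuclideanSpace.proj (𝕜 := ℝ) i))) := by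
      funext x
      rw [hDf x]
      rfl
    rw [hessMat_eq', hT, ContinuousLinearMap.fderiv]
    simp only [ContinuousLinearMap.add_apply, ContinuousLinearMap.smulRight_apply,
      ContinuousLinearMap.coe_smul', Pi.smul_apply, smul_eq_mul]
    have hpi : ∀ (m q : Fin d), (EuclideanSpace.proj (𝕜 := ℝ) m) (EuclideanSpace.single q (1:ℝ))
        = if m = q then (1:ℝ) else 0 := by
      intro m q
      have h0 : (EuclideanSpace.proj (𝕜 := ℝ) m) (EuclideanSpace.single q (1:ℝ))
          = (EuclideanSpace.single q (1:ℝ)) m := rfl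
      rw [h0, EuclideanSpace.single_apply]
    rw [hpi, hpi, hpi, hpi]
  -- trace term on the image side
  have htrQ' : (Q (g s, a') * hessMat (fun y : EuclideanSpace ℝ (Fin d) => y i * y j) (g s)).trace
      = 2 * Q (g s, a') i j := by
    rw [trace_mul_formula]
    have hsym : Q (g s, a') j i = Q (g s, a') i j := hQsym₂.apply i j
    have hstep : ∀ p : Fin d, ∑ q, Q (g s, a') p q
        * hessMat (fun y : EuclideanSpace ℝ (Fin d) => y i * y j) (g s) q p
        = (if j = p then Q (g s, a') p i else 0) + (if i = p then Q (g s, a') p j else 0) := by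
      intro p
      have hterm : ∀ q, Q (g s, a') p q
          * hessMat (fun y : EuclideanSpace ℝ (Fin d) => y i * y j) (g s) q p
          = (if i = q then (if j = p then Q (g s, a') p q else 0) else 0)
            + (if j = q then (if i = p then Q (g s, a') p q else 0) else 0) := by
        intro q
        rw [hHf q p]
        split_ifs <;> ring
      rw [Finset.sum_congr rfl (fun q _ => hterm q), Finset.sum_add_distrib,
        Finset.sum_ite_eq Finset.univ i, Finset.sum_ite_eq Finset.univ j]
      simp
    rw [Finset.sum_congr rfl (fun p _ => hstep p), Finset.sum_add_distrib,
      Finset.sum_ite_eq Finset.univ j, Finset.sum_ite_eq Finset.univ i]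
    simp only [Finset.mem_univ, if_true]
    linarith
  -- gradient term on the image side
  have hgrad' : fderiv ℝ (fun y : EuclideanSpace ℝ (Fin d) => y i * y j) (g s) (b (g s, a'))
      = g s i * b (g s, a') j + g s j * b (g s, a') i := by
    rw [hDf (g s)]
    simp
  -- first derivative of the composed quadratic
  have hDprod : ∀ x, fderiv ℝ (fun y => g y i * g y j) x
      = g x i • fderiv ℝ (fun y => g y j) x + g x j • fderiv ℝ (fun y => g y i) x :=
    fun x => fderiv_mul ((hgkd i) x) ((hgkd j) x)
  -- gradient term on the source side
  have hgrad : fderiv ℝ (fun y => g y i * g y j) s (b (s, a))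
      = g s i * (jacMat g s).mulVec (fun m => b (s, a) m) j
        + g s j * (jacMat g s).mulVec (fun m => b (s, a) m) i := by
    rw [hDprod s]
    simp only [ContinuousLinearMap.add_apply, ContinuousLinearMap.coe_smul', Pi.smul_apply,
      smul_eq_mul]
    rw [hlin i, hlin j]
  -- second derivative of the composed quadratic
  have hHprod : ∀ p q : Fin d,
      hessMat (fun y => g y i * g y j) s p q
        = g s i * hessMat (fun y => g y j) s p q
          + jacMat g s i p * jacMat g s j q
          + g s j * hessMat (fun y => g y i) s p q
          + jacMat g s j p * jacMat g s i q := by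
    intro p q
    have hfe : (fderiv ℝ (fun y => g y i * g y j))
        = fun x => g x i • fderiv ℝ (fun y => g y j) x + g x j • fderiv ℝ (fun y => g y i) x :=
      funext hDprod
    have hdi : DifferentiableAt ℝ (fun x => g x i • fderiv ℝ (fun y => g y j) x) s :=
      ((hgkd i) s).smul ((hD2gk j) s)
    have hdj : DifferentiableAt ℝ (fun x => g x j • fderiv ℝ (fun y => g y i) x) s :=
      ((hgkd j) s).smul ((hD2gk i) s)
    rw [hessMat_eq', hfe, fderiv_fun_add hdi hdj,
      fderiv_fun_smul ((hgkd i) s) ((hD2gk j) s), fderiv_fun_smul ((hgkd j) s) ((hD2gk i) s)]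
    rw [hessMat_eq', hessMat_eq']
    simp only [ContinuousLinearMap.add_apply, ContinuousLinearMap.coe_smul', Pi.smul_apply,
      ContinuousLinearMap.smulRight_apply, smul_eq_mul]
    rw [hJ i p, hJ j p, hJ i q, hJ j q]
    ring
  -- trace term on the source side
  have htrQ : (Q (s, a) * hessMat (fun y => g y i * g y j) s).trace
      = g s i * (Q (s, a) * hessMat (fun y => g y j) s).trace
        + g s j * (Q (s, a) * hessMat (fun y => g y i) s).trace
        + 2 * (jacMat g s * Q (s, a) * (jacMat g s)ᵀ) i j := by
    rw [trace_mul_formula, trace_mul_formula, trace_mul_formula]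
    have hexp : ∀ p q : Fin d, Q (s, a) p q * hessMat (fun y => g y i * g y j) s q p
        = g s i * (Q (s, a) p q * hessMat (fun y => g y j) s q p)
          + g s j * (Q (s, a) p q * hessMat (fun y => g y i) s q p)
          + Q (s, a) p q * jacMat g s i q * jacMat g s j p
          + Q (s, a) p q * jacMat g s j q * jacMat g s i p := by
      intro p q; rw [hHprod q p]; ring
    have hT : (jacMat g s * Q (s, a) * (jacMat g s)ᵀ) i j
        = ∑ p, ∑ q, jacMat g s i q * Q (s, a) q p * jacMat g s j p := by
      simp only [Matrix.mul_apply, Matrix.transpose_apply, Finset.sum_mul]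
    have hSb : ∑ p, ∑ q, Q (s, a) p q * jacMat g s i q * jacMat g s j p
        = (jacMat g s * Q (s, a) * (jacMat g s)ᵀ) i j := by
      rw [hT]
      refine Finset.sum_congr rfl fun p _ => Finset.sum_congr rfl fun q _ => ?_
      have := congrFun (congrFun hQsym₁ q) p
      simp only [Matrix.transpose_apply] at this
      rw [← this]; ring
    have hSd : ∑ p, ∑ q, Q (s, a) p q * jacMat g s j q * jacMat g s i p
        = (jacMat g s * Q (s, a) * (jacMat g s)ᵀ) i j := by
      rw [hT, Finset.sum_comm]
      refine Finset.sum_congr rfl fun p _ => Finset.sum_congr rfl fun q _ => ?_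
      ring
    calc ∑ p, ∑ q, Q (s, a) p q * hessMat (fun y => g y i * g y j) s q p
        = ∑ p, ∑ q, (g s i * (Q (s, a) p q * hessMat (fun y => g y j) s q p)
          + g s j * (Q (s, a) p q * hessMat (fun y => g y i) s q p)
          + Q (s, a) p q * jacMat g s i q * jacMat g s j p
          + Q (s, a) p q * jacMat g s j q * jacMat g s i p) := by
          exact Finset.sum_congr rfl fun p _ => Finset.sum_congr rfl fun q _ => hexp p q
      _ = g s i * (∑ p, ∑ q, Q (s, a) p q * hessMat (fun y => g y j) s q p)
          + g s j * (∑ p, ∑ q, Q (s, a) p q * hessMat (fun y => g y i) s q p)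
          + (∑ p, ∑ q, Q (s, a) p q * jacMat g s i q * jacMat g s j p)
          + (∑ p, ∑ q, Q (s, a) p q * jacMat g s j q * jacMat g s i p) := by
          simp only [Finset.sum_add_distrib, Finset.mul_sum]
      _ = _ := by rw [hSb, hSd]; ring
  -- put everything together
  rw [hgrad', htrQ'] at h
  rw [hgrad, htrQ] at h
  have hbi := hdrift i
  have hbj := hdrift j
  rw [hbi, hbj] at h
  linarith
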